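/- The dual functional K of semi-discrete partial optimal transport is concave on (0,∞)^N and continuously differentiable there, with gradient ∇K(ψ) = α − G(ψ); that is, ∂K/∂ψ_i(ψ) = α_i − ρ(RLag_i(ψ)) for every i ∈ {1,…,N} and every ψ ∈ (0,∞)^N. -/

import Mathlib

open MeasureTheory Real Filter Set

noncomputable section

/-- The (unrestricted) Laguerre cell of index `i` in `ℝ^d`. -/
def LagD {d N : ℕ} (y : Fin N → EuclideanSpace ℝ (Fin d)) (ψ : Fin N → ℝ) (i : Fin N) :
    Set (EuclideanSpace ℝ (Fin d)) :=
  {x | ∀ j, ‖x - y i‖ ^ 2 - ψ i ≤ ‖x - y j‖ ^ 2 - ψ j}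

/-- The restricted Laguerre cell of index `i`. -/
def RLagD {d N : ℕ} (y : Fin N → EuclideanSpace ℝ (Fin d)) (ψ : Fin N → ℝ) (i : Fin N) :
    Set (EuclideanSpace ℝ (Fin d)) :=
  LagD y ψ i ∩ {x | ‖x - y i‖ ^ 2 ≤ ψ i}

/-- The dual functional of semi-discrete partial optimal transport. -/
def KD {d N : ℕ} (ρ : Measure (EuclideanSpace ℝ (Fin d)))
    (y : Fin N → EuclideanSpace ℝ (Fin d)) (α : Fin N → ℝ) (ψ : Fin N → ℝ) : ℝ :=
  (∫ x, min 0 (⨅ i, (‖x - y i‖ ^ 2 - ψ i)) ∂ρ) + ∑ i, α i * ψ i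

open Topology

namespace PD

variable {d N : ℕ}

def mval (y : Fin N → EuclideanSpace ℝ (Fin d)) (ψ : Fin N → ℝ) (x : EuclideanSpace ℝ (Fin d)) : ℝ :=
  min 0 (⨅ i, (‖x - y i‖ ^ 2 - ψ i))

def SD (y : Fin N → EuclideanSpace ℝ (Fin d)) (ψ : Fin N → ℝ) (i : Fin N) :
    Set (EuclideanSpace ℝ (Fin d)) :=
  {x | ‖x - y i‖ ^ 2 - ψ i < 0 ∧ ∀ j, j ≠ i → ‖x - y i‖ ^ 2 - ψ i < ‖x - y j‖ ^ 2 - ψ j}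

def BadD (y : Fin N → EuclideanSpace ℝ (Fin d)) (ψ : Fin N → ℝ) : Set (EuclideanSpace ℝ (Fin d)) :=
  (⋃ i, {x | ‖x - y i‖ ^ 2 = ψ i}) ∪
    ⋃ i, ⋃ j, ⋃ (_ : i ≠ j), {x | ‖x - y i‖ ^ 2 - ψ i = ‖x - y j‖ ^ 2 - ψ j}

def DD (y : Fin N → EuclideanSpace ℝ (Fin d)) (ψ : Fin N → ℝ)
    (x : EuclideanSpace ℝ (Fin d)) : (Fin N → ℝ) →L[ℝ] ℝ :=
  ∑ i, Set.indicator (SD y ψ i)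
    (fun _ => -(ContinuousLinearMap.proj i : (Fin N → ℝ) →L[ℝ] ℝ)) x

def RLagD' (y : Fin N → EuclideanSpace ℝ (Fin d)) (ψ : Fin N → ℝ) (i : Fin N) :
    Set (EuclideanSpace ℝ (Fin d)) :=
  {x | ∀ j, ‖x - y i‖ ^ 2 - ψ i ≤ ‖x - y j‖ ^ 2 - ψ j} ∩ {x | ‖x - y i‖ ^ 2 ≤ ψ i}


theorem sphere_null {d : ℕ} (hd : 1 ≤ d) (v : EuclideanSpace ℝ (Fin d)) (c : ℝ) :
    volume {x : EuclideanSpace ℝ (Fin d) | ‖x - v‖ ^ 2 = c} = 0 := by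
  haveI : Nonempty (Fin d) := ⟨⟨0, hd⟩⟩
  haveI : Nontrivial (EuclideanSpace ℝ (Fin d)) := inferInstance
  refine measure_mono_null ?_ (Measure.addHaar_sphere volume v (Real.sqrt c))
  intro x hx
  simp only [mem_setOf_eq] at hx
  have : ‖x - v‖ = Real.sqrt c := by
    rw [← hx, Real.sqrt_sq (norm_nonneg _)]
  simpa [dist_eq_norm] using this

theorem hyperplane_null {d : ℕ} (v w : EuclideanSpace ℝ (Fin d)) (hvw : v ≠ w) (c : ℝ) :
    volume {x : EuclideanSpace ℝ (Fin d) | ‖x - v‖ ^ 2 - ‖x - w‖ ^ 2 = c} = 0 := by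
  set u : EuclideanSpace ℝ (Fin d) := w - v with hu
  have hu0 : u ≠ 0 := sub_ne_zero.mpr (Ne.symm hvw)
  have hnu : ‖u‖ ≠ 0 := norm_ne_zero_iff.mpr hu0
  have hexp : ∀ x : EuclideanSpace ℝ (Fin d),
      ‖x - v‖ ^ 2 - ‖x - w‖ ^ 2 = 2 * inner ℝ x u + (‖v‖^2 - ‖w‖^2) := by
    intro x
    have h1 : ‖x - v‖ ^ 2 = ‖x‖^2 - 2 * inner ℝ x v + ‖v‖^2 :=
      @norm_sub_sq_real (EuclideanSpace ℝ (Fin d)) _ _ x v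
    have h2 : ‖x - w‖ ^ 2 = ‖x‖^2 - 2 * inner ℝ x w + ‖w‖^2 :=
      @norm_sub_sq_real (EuclideanSpace ℝ (Fin d)) _ _ x w
    rw [h1, h2, hu, inner_sub_right]; ring
  have hset : {x : EuclideanSpace ℝ (Fin d) | ‖x - v‖ ^ 2 - ‖x - w‖ ^ 2 = c}
      = {x | (inner ℝ x u : ℝ) = (c - (‖v‖^2 - ‖w‖^2)) / 2} := by
    ext x; simp only [mem_setOf_eq, hexp x]; constructor <;> intro h <;> linarith
  rw [hset]
  set c' : ℝ := (c - (‖v‖^2 - ‖w‖^2)) / 2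
  set K : Submodule ℝ (EuclideanSpace ℝ (Fin d)) := LinearMap.ker ((innerSL ℝ u : EuclideanSpace ℝ (Fin d) →L[ℝ] ℝ) : EuclideanSpace ℝ (Fin d) →ₗ[ℝ] ℝ)
  have hK : K ≠ ⊤ := by
    intro h
    have : (inner ℝ u u : ℝ) = 0 := by
      have := (Submodule.eq_top_iff'.mp h) u
      simpa [K, LinearMap.mem_ker] using this
    exact hu0 (inner_self_eq_zero.mp this)
  set x₀ : EuclideanSpace ℝ (Fin d) := (c' / ‖u‖^2) • u with hx₀def
  have hx₀ : (inner ℝ x₀ u : ℝ) = c' := by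
    simp only [hx₀def, real_inner_smul_left]
    rw [real_inner_self_eq_norm_sq]
    field_simp
  have : {x : EuclideanSpace ℝ (Fin d) | (inner ℝ x u : ℝ) = c'} = (fun x => x + (-x₀)) ⁻¹' (K : Set _) := by
    ext x
    simp only [mem_preimage, SetLike.mem_coe, K, LinearMap.mem_ker, mem_setOf_eq, ContinuousLinearMap.coe_coe, innerSL_apply_apply]
    rw [real_inner_comm (x + -x₀) u]; rw [inner_add_left, inner_neg_left, hx₀]
    constructor <;> intro h <;> linarith
  rw [this, measure_preimage_add_right]
  exact Measure.addHaar_submodule _ K hK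

theorem bad_null (hd : 1 ≤ d) (ρ : Measure (EuclideanSpace ℝ (Fin d))) (hac : ρ ≪ volume)
    (y : Fin N → EuclideanSpace ℝ (Fin d)) (hy : Function.Injective y) (ψ : Fin N → ℝ) :
    ρ (BadD y ψ) = 0 := by
  apply hac
  apply measure_union_null
  · exact measure_iUnion_null fun i => sphere_null hd (y i) (ψ i)
  · refine measure_iUnion_null fun i => measure_iUnion_null fun j => measure_iUnion_null fun hij => ?_
    have : {x : EuclideanSpace ℝ (Fin d) | ‖x - y i‖ ^ 2 - ψ i = ‖x - y j‖ ^ 2 - ψ j}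
        = {x | ‖x - y i‖ ^ 2 - ‖x - y j‖ ^ 2 = ψ i - ψ j} := by
      ext x; simp only [mem_setOf_eq]; constructor <;> intro h <;> linarith
    rw [this]
    exact hyperplane_null (y i) (y j) (fun h => hij (hy h)) _

theorem mval_le_zero' (y : Fin N → EuclideanSpace ℝ (Fin d)) (ψ : Fin N → ℝ)
    (x : EuclideanSpace ℝ (Fin d)) : mval y ψ x ≤ 0 := min_le_left _ _

theorem mval_lip [Nonempty (Fin N)] (y : Fin N → EuclideanSpace ℝ (Fin d))
    (x : EuclideanSpace ℝ (Fin d)) : LipschitzWith 1 (fun ψ => mval y ψ x) := by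
  have key : ∀ ψ φ : Fin N → ℝ, mval y ψ x ≤ mval y φ x + dist ψ φ := by
    intro ψ φ
    have hc : (0:ℝ) ≤ dist ψ φ := dist_nonneg
    have hz : mval y ψ x ≤ 0 := mval_le_zero' y ψ x
    have key2 : mval y ψ x - dist ψ φ ≤ mval y φ x := by
      refine le_min (by linarith) (le_ciInf fun j => ?_)
      have h1 : mval y ψ x ≤ ‖x - y j‖ ^ 2 - ψ j :=
        (min_le_right _ _).trans (ciInf_le (Finite.bddBelow_range _) j)
      have h2 : |ψ j - φ j| ≤ dist ψ φ := by
        rw [dist_eq_norm]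
        simpa [Real.norm_eq_abs] using norm_le_pi_norm (ψ - φ) j
      have := abs_le.mp h2
      linarith
    linarith
  refine LipschitzWith.of_dist_le_mul fun ψ φ => ?_
  rw [Real.dist_eq, NNReal.coe_one, one_mul, abs_le]
  constructor
  · have := key φ ψ; rw [dist_comm] at this; linarith
  · have := key ψ φ; linarith

theorem mval_concave [Nonempty (Fin N)] (y : Fin N → EuclideanSpace ℝ (Fin d))
    (x : EuclideanSpace ℝ (Fin d)) {a b : ℝ} (ha : 0 ≤ a) (hb : 0 ≤ b) (hab : a + b = 1)
    (ψ φ : Fin N → ℝ) :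
    a * mval y ψ x + b * mval y φ x ≤ mval y (a • ψ + b • φ) x := by
  have hm1 : mval y ψ x ≤ 0 := min_le_left _ _
  have hm2 : mval y φ x ≤ 0 := min_le_left _ _
  refine le_min (add_nonpos (mul_nonpos_of_nonneg_of_nonpos ha hm1)
    (mul_nonpos_of_nonneg_of_nonpos hb hm2)) (le_ciInf fun i => ?_)
  have h1 : mval y ψ x ≤ ‖x - y i‖ ^ 2 - ψ i :=
    (min_le_right _ _).trans (ciInf_le (Finite.bddBelow_range _) i)
  have h2 : mval y φ x ≤ ‖x - y i‖ ^ 2 - φ i :=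
    (min_le_right _ _).trans (ciInf_le (Finite.bddBelow_range _) i)
  have happ : (a • ψ + b • φ) i = a * ψ i + b * φ i := rfl
  rw [happ]
  nlinarith [mul_le_mul_of_nonneg_left h1 ha, mul_le_mul_of_nonneg_left h2 hb]

theorem mval_cont [Nonempty (Fin N)] (y : Fin N → EuclideanSpace ℝ (Fin d)) (ψ : Fin N → ℝ) :
    Continuous (fun x => mval y ψ x) := by
  refine continuous_const.min ?_
  have : ∀ x : EuclideanSpace ℝ (Fin d), (⨅ i, (‖x - y i‖ ^ 2 - ψ i))
      = Finset.univ.inf' Finset.univ_nonempty (fun i => ‖x - y i‖ ^ 2 - ψ i) := by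
    intro x; rw [Finset.inf'_univ_eq_ciInf]
  simp_rw [this]
  exact Continuous.finset_inf'_apply _ fun i _ =>
    (((continuous_id.sub continuous_const).norm.pow 2).sub continuous_const)

theorem mval_le_zero (y : Fin N → EuclideanSpace ℝ (Fin d)) (ψ : Fin N → ℝ)
    (x : EuclideanSpace ℝ (Fin d)) : mval y ψ x ≤ 0 := min_le_left _ _

theorem mval_abs_le [Nonempty (Fin N)] (y : Fin N → EuclideanSpace ℝ (Fin d)) (ψ : Fin N → ℝ)
    (x : EuclideanSpace ℝ (Fin d)) : |mval y ψ x| ≤ ‖ψ‖ := by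
  rw [abs_le]
  refine ⟨le_min (neg_nonpos.mpr (norm_nonneg _)) (le_ciInf fun i => ?_), (mval_le_zero y ψ x).trans (norm_nonneg _)⟩
  have : |ψ i| ≤ ‖ψ‖ := by simpa [Real.norm_eq_abs] using norm_le_pi_norm ψ i
  have := abs_le.mp this
  nlinarith [sq_nonneg ‖x - y i‖]

theorem mval_integrable [Nonempty (Fin N)] (ρ : Measure (EuclideanSpace ℝ (Fin d)))
    [IsFiniteMeasure ρ] (y : Fin N → EuclideanSpace ℝ (Fin d)) (ψ : Fin N → ℝ) :
    Integrable (fun x => mval y ψ x) ρ := by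
  refine Integrable.mono' (integrable_const ‖ψ‖) (mval_cont y ψ).aestronglyMeasurable
    (ae_of_all _ fun x => ?_)
  simpa [Real.norm_eq_abs] using mval_abs_le y ψ x

theorem SD_open (y : Fin N → EuclideanSpace ℝ (Fin d)) (ψ : Fin N → ℝ) (i : Fin N) :
    IsOpen (SD y ψ i) := by
  have : SD y ψ i = {x : EuclideanSpace ℝ (Fin d) | ‖x - y i‖ ^ 2 - ψ i < 0} ∩
      ⋂ j, {x | j ≠ i → ‖x - y i‖ ^ 2 - ψ i < ‖x - y j‖ ^ 2 - ψ j} := by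
    ext x; simp [SD, Set.mem_iInter, mem_setOf_eq]
  rw [this]
  have hcont : ∀ j : Fin N, Continuous fun x : EuclideanSpace ℝ (Fin d) => ‖x - y j‖ ^ 2 - ψ j :=
    fun j => ((continuous_id.sub continuous_const).norm.pow 2).sub continuous_const
  refine IsOpen.inter (isOpen_lt (hcont i) continuous_const) (isOpen_iInter_of_finite fun j => ?_)
  by_cases hj : j = i
  · simp [hj]
  · simpa [hj] using isOpen_lt (hcont i) (hcont j)

theorem RLagD'_closed (y : Fin N → EuclideanSpace ℝ (Fin d)) (ψ : Fin N → ℝ) (i : Fin N) :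
    IsClosed (RLagD' y ψ i) := by
  have hcont : ∀ j : Fin N, Continuous fun x : EuclideanSpace ℝ (Fin d) => ‖x - y j‖ ^ 2 - ψ j :=
    fun j => ((continuous_id.sub continuous_const).norm.pow 2).sub continuous_const
  refine IsClosed.inter ?_ ?_
  · have : {x : EuclideanSpace ℝ (Fin d) | ∀ j, ‖x - y i‖ ^ 2 - ψ i ≤ ‖x - y j‖ ^ 2 - ψ j}
        = ⋂ j, {x | ‖x - y i‖ ^ 2 - ψ i ≤ ‖x - y j‖ ^ 2 - ψ j} := by
      ext x; simp [Set.mem_iInter]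
    rw [this]
    exact isClosed_iInter fun j => isClosed_le (hcont i) (hcont j)
  · have : {x : EuclideanSpace ℝ (Fin d) | ‖x - y i‖ ^ 2 ≤ ψ i}
        = {x | ‖x - y i‖ ^ 2 - ψ i ≤ 0} := by
      ext x; simp only [mem_setOf_eq]; constructor <;> intro h <;> linarith
    rw [this]
    exact isClosed_le (hcont i) continuous_const

theorem RLagD'_diff (y : Fin N → EuclideanSpace ℝ (Fin d)) (ψ : Fin N → ℝ) (i : Fin N) :
    RLagD' y ψ i \ SD y ψ i ⊆ BadD y ψ := by
  rintro x ⟨⟨h1, h2⟩, hS⟩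
  simp only [SD, mem_setOf_eq, not_and, not_forall] at hS
  by_cases hlt : ‖x - y i‖ ^ 2 - ψ i < 0
  · obtain ⟨j, hj, hnlt⟩ := hS hlt
    have : ‖x - y i‖ ^ 2 - ψ i = ‖x - y j‖ ^ 2 - ψ j := le_antisymm (h1 j) (not_lt.mp hnlt)
    exact Or.inr (mem_iUnion.mpr ⟨i, mem_iUnion.mpr ⟨j, mem_iUnion.mpr ⟨Ne.symm hj, this⟩⟩⟩)
  · have : ‖x - y i‖ ^ 2 = ψ i := le_antisymm h2 (by linarith [not_lt.mp hlt])
    exact Or.inl (mem_iUnion.mpr ⟨i, this⟩)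

theorem SD_subset (y : Fin N → EuclideanSpace ℝ (Fin d)) (ψ : Fin N → ℝ) (i : Fin N) :
    SD y ψ i ⊆ RLagD' y ψ i := by
  rintro x ⟨h1, h2⟩
  refine ⟨fun j => ?_, (sub_neg.mp h1).le⟩
  by_cases hj : j = i
  · subst hj; rfl
  · exact le_of_lt (h2 j hj)

theorem measure_SD_eq (ρ : Measure (EuclideanSpace ℝ (Fin d)))
    (y : Fin N → EuclideanSpace ℝ (Fin d)) (ψ : Fin N → ℝ) (hbad : ρ (BadD y ψ) = 0) (i : Fin N) :
    ρ (SD y ψ i) = ρ (RLagD' y ψ i) := by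
  refine le_antisymm (measure_mono (SD_subset y ψ i)) ?_
  calc ρ (RLagD' y ψ i) ≤ ρ (SD y ψ i ∪ BadD y ψ) := by
        refine measure_mono fun x hx => ?_
        by_cases hxS : x ∈ SD y ψ i
        · exact Or.inl hxS
        · exact Or.inr (RLagD'_diff y ψ i ⟨hx, hxS⟩)
    _ ≤ ρ (SD y ψ i) + ρ (BadD y ψ) := measure_union_le _ _
    _ = ρ (SD y ψ i) := by rw [hbad, add_zero]

theorem openU (c : Fin N → ℝ) (i₀ : Fin N) :
    IsOpen {φ : Fin N → ℝ | c i₀ - φ i₀ < 0 ∧ ∀ j, j ≠ i₀ → c i₀ - φ i₀ < c j - φ j} := by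
  have hcont : ∀ j : Fin N, Continuous fun φ : Fin N → ℝ => c j - φ j :=
    fun j => continuous_const.sub (continuous_apply j)
  have : {φ : Fin N → ℝ | c i₀ - φ i₀ < 0 ∧ ∀ j, j ≠ i₀ → c i₀ - φ i₀ < c j - φ j}
      = {φ : Fin N → ℝ | c i₀ - φ i₀ < 0} ∩ ⋂ j, {φ | j ≠ i₀ → c i₀ - φ i₀ < c j - φ j} := by
    ext φ; simp [Set.mem_iInter]
  rw [this]
  refine IsOpen.inter (isOpen_lt (hcont i₀) continuous_const) (isOpen_iInter_of_finite fun j => ?_)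
  by_cases hj : j = i₀
  · simp [hj]
  · simpa [hj] using isOpen_lt (hcont i₀) (hcont j)

theorem openU' (c : Fin N → ℝ) : IsOpen {φ : Fin N → ℝ | ∀ j, 0 < c j - φ j} := by
  have : {φ : Fin N → ℝ | ∀ j, 0 < c j - φ j} = ⋂ j, {φ | 0 < c j - φ j} := by
    ext φ; simp [Set.mem_iInter]
  rw [this]
  exact isOpen_iInter_of_finite fun j =>
    isOpen_lt continuous_const (continuous_const.sub (continuous_apply j))

theorem mval_eq_at (y : Fin N → EuclideanSpace ℝ (Fin d)) [Nonempty (Fin N)]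
    (φ : Fin N → ℝ) (x : EuclideanSpace ℝ (Fin d)) (i₀ : Fin N)
    (hneg : ‖x - y i₀‖ ^ 2 - φ i₀ < 0)
    (hlt : ∀ j, j ≠ i₀ → ‖x - y i₀‖ ^ 2 - φ i₀ < ‖x - y j‖ ^ 2 - φ j) :
    mval y φ x = ‖x - y i₀‖ ^ 2 - φ i₀ := by
  have hinf : (⨅ j, (‖x - y j‖ ^ 2 - φ j)) = ‖x - y i₀‖ ^ 2 - φ i₀ := by
    refine le_antisymm (ciInf_le (Finite.bddBelow_range _) i₀) (le_ciInf fun j => ?_)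
    by_cases hj : j = i₀
    · subst hj; rfl
    · exact le_of_lt (hlt j hj)
  rw [mval, hinf, min_eq_right hneg.le]

theorem DD_deriv [Nonempty (Fin N)] (y : Fin N → EuclideanSpace ℝ (Fin d)) (ψ : Fin N → ℝ)
    (x : EuclideanSpace ℝ (Fin d)) (hx : x ∉ BadD y ψ) :
    HasFDerivAt (fun φ => mval y φ x) (DD y ψ x) ψ := by
  have hgood1 : ∀ i, ‖x - y i‖ ^ 2 ≠ ψ i := by
    intro i h
    exact hx (Or.inl (mem_iUnion.mpr ⟨i, h⟩))
  have hgood2 : ∀ i j, i ≠ j → ‖x - y i‖ ^ 2 - ψ i ≠ ‖x - y j‖ ^ 2 - ψ j := by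
    intro i j hij h
    exact hx (Or.inr (mem_iUnion.mpr ⟨i, mem_iUnion.mpr ⟨j, mem_iUnion.mpr ⟨hij, h⟩⟩⟩))
  obtain ⟨i₀, hmin⟩ := Finite.exists_min (fun j => ‖x - y j‖ ^ 2 - ψ j)
  rcases lt_trichotomy (‖x - y i₀‖ ^ 2 - ψ i₀) 0 with hneg | hzero | hpos
  · -- the minimum is negative: derivative is -proj i₀
    have hxS : x ∈ SD y ψ i₀ :=
      ⟨hneg, fun j hj => lt_of_le_of_ne (hmin j) (hgood2 i₀ j (Ne.symm hj))⟩
    have hD : DD y ψ x = -(ContinuousLinearMap.proj i₀ : (Fin N → ℝ) →L[ℝ] ℝ) := by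
      rw [DD, Finset.sum_eq_single i₀]
      · rw [Set.indicator_of_mem hxS]
      · intro j _ hj
        have hxj : x ∉ SD y ψ j := by
          rintro ⟨hj1, hj2⟩
          exact absurd (hmin j) (not_le.mpr (hj2 i₀ (Ne.symm hj)))
        rw [Set.indicator_of_notMem hxj]
      · intro h; exact absurd (Finset.mem_univ i₀) h
    rw [hD]
    have base : HasFDerivAt (fun φ : Fin N → ℝ => ‖x - y i₀‖ ^ 2 - φ i₀)
        (-(ContinuousLinearMap.proj i₀ : (Fin N → ℝ) →L[ℝ] ℝ)) ψ := by
      exact (hasFDerivAt_apply i₀ ψ).const_sub (‖x - y i₀‖ ^ 2)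
    refine base.congr_of_eventuallyEq ?_
    have hU : {φ : Fin N → ℝ | ‖x - y i₀‖ ^ 2 - φ i₀ < 0 ∧
        ∀ j, j ≠ i₀ → ‖x - y i₀‖ ^ 2 - φ i₀ < ‖x - y j‖ ^ 2 - φ j} ∈ 𝓝 ψ :=
      (openU (fun j => ‖x - y j‖ ^ 2) i₀).mem_nhds hxS
    filter_upwards [hU] with φ hφ
    exact mval_eq_at y φ x i₀ hφ.1 hφ.2
  · exact absurd (by linarith : ‖x - y i₀‖ ^ 2 = ψ i₀) (hgood1 i₀)
  · -- the minimum is positive: derivative is 0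
    have hD : DD y ψ x = 0 := by
      rw [DD]
      refine Finset.sum_eq_zero fun j _ => ?_
      have hxj : x ∉ SD y ψ j := by
        rintro ⟨hj1, _⟩
        exact absurd (hmin j) (not_le.mpr (by linarith))
      rw [Set.indicator_of_notMem hxj]
    rw [hD]
    refine (hasFDerivAt_const (0:ℝ) ψ).congr_of_eventuallyEq ?_
    have hU : {φ : Fin N → ℝ | ∀ j, 0 < ‖x - y j‖ ^ 2 - φ j} ∈ 𝓝 ψ :=
      (openU' (fun j => ‖x - y j‖ ^ 2)).mem_nhds (fun j => lt_of_lt_of_le hpos (hmin j))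
    filter_upwards [hU] with φ hφ
    exact min_eq_left (le_ciInf fun j => (hφ j).le)

theorem DD_integrable (ρ : Measure (EuclideanSpace ℝ (Fin d))) [IsFiniteMeasure ρ]
    (y : Fin N → EuclideanSpace ℝ (Fin d)) (ψ : Fin N → ℝ) :
    Integrable (fun x => DD y ψ x) ρ := by
  unfold DD
  apply integrable_finset_sum (f := fun i x => (SD y ψ i).indicator
    (fun _ => -(ContinuousLinearMap.proj i : (Fin N → ℝ) →L[ℝ] ℝ)) x)
  intro i _
  exact (integrable_const (μ := ρ) (-(ContinuousLinearMap.proj i : (Fin N → ℝ) →L[ℝ] ℝ))).indicator (SD_open y ψ i).measurableSet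

theorem DD_integral (ρ : Measure (EuclideanSpace ℝ (Fin d))) [IsFiniteMeasure ρ]
    (y : Fin N → EuclideanSpace ℝ (Fin d)) (ψ : Fin N → ℝ) :
    ∫ x, DD y ψ x ∂ρ = ∑ i, (ρ (SD y ψ i)).toReal •
      (-(ContinuousLinearMap.proj i : (Fin N → ℝ) →L[ℝ] ℝ)) := by
  rw [show (fun x => DD y ψ x) = fun x => ∑ i, Set.indicator (SD y ψ i)
    (fun _ => -(ContinuousLinearMap.proj i : (Fin N → ℝ) →L[ℝ] ℝ)) x from rfl]
  rw [integral_finset_sum _ fun i _ =>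
    (integrable_const _).indicator (SD_open y ψ i).measurableSet]
  exact Finset.sum_congr rfl fun i _ =>
    integral_indicator_const _ (SD_open y ψ i).measurableSet

theorem intF_deriv (hd : 1 ≤ d) [Nonempty (Fin N)] (ρ : Measure (EuclideanSpace ℝ (Fin d)))
    [IsProbabilityMeasure ρ] (hac : ρ ≪ volume) (y : Fin N → EuclideanSpace ℝ (Fin d))
    (hy : Function.Injective y) (ψ : Fin N → ℝ) :
    HasFDerivAt (fun φ => ∫ x, mval y φ x ∂ρ)
      (∑ i, (ρ (RLagD' y ψ i)).toReal •
        (-(ContinuousLinearMap.proj i : (Fin N → ℝ) →L[ℝ] ℝ))) ψ := by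
  have hbad := bad_null hd ρ hac y hy ψ
  have hae : ∀ᵐ x ∂ρ, x ∉ BadD y ψ := by
    rw [← compl_mem_ae_iff] at hbad
    exact hbad
  have H := hasFDerivAt_integral_of_dominated_loc_of_lip (μ := ρ)
    (F := fun φ x => mval y φ x) (F' := fun x => DD y ψ x) (x₀ := ψ)
    (bound := fun _ => (1:ℝ)) (s := Metric.ball ψ 1) (Metric.ball_mem_nhds ψ one_pos)
    (Eventually.of_forall fun φ => (mval_cont y φ).aestronglyMeasurable)
    (mval_integrable ρ y ψ)
    (DD_integrable ρ y ψ).aestronglyMeasurable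
    (ae_of_all _ fun x => by
      have h1 : Real.nnabs (1:ℝ) = 1 := by ext; simp
      rw [h1]
      exact (mval_lip y x).lipschitzOnWith (s := Metric.ball ψ 1))
    (integrable_const 1)
    (hae.mono fun x hx => DD_deriv y ψ x hx)
  have := H.2
  rw [DD_integral ρ y ψ] at this
  simp only [measure_SD_eq ρ y ψ hbad] at this
  exact this

theorem G_cont_i (hd : 1 ≤ d) (ρ : Measure (EuclideanSpace ℝ (Fin d)))
    [IsProbabilityMeasure ρ] (hac : ρ ≪ volume) (y : Fin N → EuclideanSpace ℝ (Fin d))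
    (hy : Function.Injective y) (i : Fin N) :
    Continuous (fun ψ : Fin N → ℝ => (ρ (RLagD' y ψ i)).toReal) := by
  rw [continuous_iff_continuousAt]
  intro ψ₀
  rw [ContinuousAt, tendsto_iff_seq_tendsto]
  intro u hu
  have hbad := bad_null hd ρ hac y hy ψ₀
  have hae : ∀ᵐ x ∂ρ, x ∉ BadD y ψ₀ := by rw [← compl_mem_ae_iff] at hbad; exact hbad
  have hmeas : ∀ ψ : Fin N → ℝ, MeasurableSet (RLagD' y ψ i) :=
    fun ψ => (RLagD'_closed y ψ i).measurableSet
  have hrepr : ∀ ψ : Fin N → ℝ, (ρ (RLagD' y ψ i)).toReal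
      = ∫ x, Set.indicator (RLagD' y ψ i) (fun _ => (1:ℝ)) x ∂ρ := by
    intro ψ; rw [integral_indicator_const _ (hmeas ψ)]; simp [Measure.real]
  simp only [Function.comp_def, hrepr]
  apply tendsto_integral_of_dominated_convergence (bound := fun _ => (1:ℝ))
  · intro n; exact (stronglyMeasurable_const.indicator (hmeas _)).aestronglyMeasurable
  · exact integrable_const 1
  · intro n
    refine ae_of_all _ fun x => ?_
    by_cases hm : x ∈ RLagD' y (u n) i
    · simp [Set.indicator_of_mem hm]
    · simp [Set.indicator_of_notMem hm]
  · filter_upwards [hae] with x hx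
    by_cases hxR : x ∈ RLagD' y ψ₀ i
    · obtain ⟨hall, hle⟩ := hxR
      have hs1 : ‖x - y i‖ ^ 2 - ψ₀ i < 0 := sub_neg.mpr
        (lt_of_le_of_ne hle fun h => hx (Or.inl (mem_iUnion.mpr ⟨i, h⟩)))
      have hs2 : ∀ j, j ≠ i → ‖x - y i‖ ^ 2 - ψ₀ i < ‖x - y j‖ ^ 2 - ψ₀ j := fun j hj =>
        lt_of_le_of_ne (hall j) fun h => hx (Or.inr (mem_iUnion.mpr ⟨i,
          mem_iUnion.mpr ⟨j, mem_iUnion.mpr ⟨Ne.symm hj, h⟩⟩⟩))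
      have hV : {φ : Fin N → ℝ | (fun j => ‖x - y j‖ ^ 2) i - φ i < 0 ∧
          ∀ j, j ≠ i → (fun j => ‖x - y j‖ ^ 2) i - φ i < (fun j => ‖x - y j‖ ^ 2) j - φ j}
            ∈ 𝓝 ψ₀ :=
        (openU (fun j => ‖x - y j‖ ^ 2) i).mem_nhds ⟨hs1, hs2⟩
      have hev : ∀ᶠ n in atTop, x ∈ RLagD' y (u n) i := by
        filter_upwards [hu hV] with n hn
        obtain ⟨hn1, hn2⟩ := hn
        refine ⟨fun j => ?_, (sub_neg.mp hn1).le⟩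
        by_cases hj : j = i
        · subst hj; rfl
        · exact (hn2 j hj).le
      rw [Set.indicator_of_mem (show x ∈ RLagD' y ψ₀ i from ⟨hall, hle⟩) (fun _ => (1:ℝ))]
      refine Tendsto.congr' ?_ tendsto_const_nhds
      filter_upwards [hev] with n hn
      rw [Set.indicator_of_mem hn]
    · rw [Set.indicator_of_notMem hxR]
      have hev : ∀ᶠ n in atTop, x ∉ RLagD' y (u n) i := by
        by_cases hle : ‖x - y i‖ ^ 2 ≤ ψ₀ i
        · have hex : ∃ j, ‖x - y j‖ ^ 2 - ψ₀ j < ‖x - y i‖ ^ 2 - ψ₀ i := by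
            by_contra h
            push_neg at h
            exact hxR ⟨fun j => h j, hle⟩
          obtain ⟨j, hjlt⟩ := hex
          have hW : {φ : Fin N → ℝ | ‖x - y j‖ ^ 2 - φ j < ‖x - y i‖ ^ 2 - φ i} ∈ 𝓝 ψ₀ :=
            (isOpen_lt (continuous_const.sub (continuous_apply j))
              (continuous_const.sub (continuous_apply i))).mem_nhds hjlt
          filter_upwards [hu hW] with n hn
          rintro ⟨hall, _⟩
          exact absurd (hall j) (not_le.mpr hn)
        · have hW : {φ : Fin N → ℝ | φ i < ‖x - y i‖ ^ 2} ∈ 𝓝 ψ₀ :=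
            (isOpen_lt (continuous_apply i) continuous_const).mem_nhds (not_le.mp hle)
          filter_upwards [hu hW] with n hn
          rintro ⟨_, h2⟩
          simp only [mem_setOf_eq] at h2
          exact absurd h2 (not_le.mpr hn)
      refine Tendsto.congr' ?_ tendsto_const_nhds
      filter_upwards [hev] with n hn
      rw [Set.indicator_of_notMem hn]

end PD

theorem stmt0 {d N : ℕ} (hd : 1 ≤ d) (hN : 0 < N)
    (ρ : Measure (EuclideanSpace ℝ (Fin d))) [IsProbabilityMeasure ρ]
    (hac : ρ ≪ volume)
    (hcs : ∃ Kc : Set (EuclideanSpace ℝ (Fin d)), IsCompact Kc ∧ ρ Kcᶜ = 0)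
    (y : Fin N → EuclideanSpace ℝ (Fin d)) (hy : Function.Injective y)
    (α : Fin N → ℝ) (hα : ∀ i, 0 < α i) (hαs : ∑ i, α i < 1) :
    ConcaveOn ℝ {ψ : Fin N → ℝ | ∀ i, 0 < ψ i} (KD ρ y α) ∧
    (∀ ψ : Fin N → ℝ, (∀ i, 0 < ψ i) →
      HasFDerivAt (KD ρ y α)
        (∑ i, ((α i - (ρ (RLagD y ψ i)).toReal) •
          (ContinuousLinearMap.proj i : (Fin N → ℝ) →L[ℝ] ℝ))) ψ) ∧
    ContinuousOn (fun ψ : Fin N → ℝ => fun i => (ρ (RLagD y ψ i)).toReal)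
      {ψ : Fin N → ℝ | ∀ i, 0 < ψ i} := by
  haveI : Nonempty (Fin N) := ⟨⟨0, hN⟩⟩
  have hRL : ∀ (ψ : Fin N → ℝ) (i : Fin N), PD.RLagD' y ψ i = RLagD y ψ i := fun ψ i => rfl
  have hKD' : ∀ ψ' : Fin N → ℝ, KD ρ y α ψ'
      = (∫ x, PD.mval y ψ' x ∂ρ) + ∑ i, α i * ψ' i := fun _ => rfl
  refine ⟨?_, ?_, ?_⟩
  · constructor
    · have : {ψ : Fin N → ℝ | ∀ i, 0 < ψ i} = Set.univ.pi (fun _ => Ioi (0:ℝ)) := by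
        ext ψ; simp [Set.mem_pi]
      rw [this]; exact convex_pi fun i _ => convex_Ioi 0
    · intro ψ hψ φ hφ a b ha hb hab
      simp only [smul_eq_mul]
      have hint : a * ∫ x, PD.mval y ψ x ∂ρ + b * ∫ x, PD.mval y φ x ∂ρ
          ≤ ∫ x, PD.mval y (a • ψ + b • φ) x ∂ρ := by
        rw [← integral_const_mul, ← integral_const_mul,
          ← integral_add ((PD.mval_integrable ρ y ψ).const_mul a)
            ((PD.mval_integrable ρ y φ).const_mul b)]
        exact integral_mono
          (((PD.mval_integrable ρ y ψ).const_mul a).add ((PD.mval_integrable ρ y φ).const_mul b))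
          (PD.mval_integrable ρ y (a • ψ + b • φ))
          (fun x => PD.mval_concave y x ha hb hab ψ φ)
      have hlin : ∑ i, α i * (a • ψ + b • φ) i
          = a * ∑ i, α i * ψ i + b * ∑ i, α i * φ i := by
        rw [Finset.mul_sum, Finset.mul_sum, ← Finset.sum_add_distrib]
        refine Finset.sum_congr rfl fun i _ => ?_
        have h : (a • ψ + b • φ) i = a * ψ i + b * φ i := rfl
        rw [h]; ring
      rw [hKD' ψ, hKD' φ, hKD' (a • ψ + b • φ), hlin]
      linarith
  · intro ψ hψ
    have hD1 := PD.intF_deriv hd ρ hac y hy ψ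
    have hD2 : HasFDerivAt (fun φ : Fin N → ℝ => ∑ i, α i * φ i)
        (∑ i, α i • (ContinuousLinearMap.proj i : (Fin N → ℝ) →L[ℝ] ℝ)) ψ := by
      have h := (∑ i, α i • (ContinuousLinearMap.proj i : (Fin N → ℝ) →L[ℝ] ℝ)).hasFDerivAt (x := ψ)
      have he : ⇑(∑ i, α i • (ContinuousLinearMap.proj i : (Fin N → ℝ) →L[ℝ] ℝ))
          = fun φ : Fin N → ℝ => ∑ i, α i * φ i := by
        funext φ
        simp [ContinuousLinearMap.sum_apply, ContinuousLinearMap.smul_apply,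
          ContinuousLinearMap.proj_apply, smul_eq_mul]
      rwa [he] at h
    have hsum := hD1.add hD2
    have heq : (∑ i, (ρ (PD.RLagD' y ψ i)).toReal •
          (-(ContinuousLinearMap.proj i : (Fin N → ℝ) →L[ℝ] ℝ)))
        + ∑ i, α i • (ContinuousLinearMap.proj i : (Fin N → ℝ) →L[ℝ] ℝ)
        = ∑ i, ((α i - (ρ (RLagD y ψ i)).toReal) •
          (ContinuousLinearMap.proj i : (Fin N → ℝ) →L[ℝ] ℝ)) := by
      rw [← Finset.sum_add_distrib]
      refine Finset.sum_congr rfl fun i _ => ?_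
      rw [hRL ψ i]
      module
    rw [heq] at hsum
    exact hsum
  · have h : (fun ψ : Fin N → ℝ => fun i => (ρ (RLagD y ψ i)).toReal)
        = fun ψ => fun i => (ρ (PD.RLagD' y ψ i)).toReal := rfl
    rw [h]
    exact (continuous_pi fun i => PD.G_cont_i hd ρ hac y hy i).continuousOn
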